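/- For every c>0 and every N≥1, E_rw[ c^(−min_{0≤j≤N}(S_1(j)−S_2(j))) ] ≤ 1 + 2·E_rw[ c^(|S_1(N)−S_2(N)|) ], where the exponents are integers and c^m denotes the real integer power. -/

import Mathlib

open Finset

/-- Partial sum `s^τ(k) = τ_1 + ⋯ + τ_k` of a word `τ ∈ {0,1}^N`. -/
def pSum {N : ℕ} (τ : Fin N → Fin 2) (k : ℕ) : ℤ :=
  ∑ i : Fin N, if (i : ℕ) < k then ((τ i : ℕ) : ℤ) else 0

/-- `min_{0 ≤ j ≤ N} (s^τ(j) − s^ξ(j))`. -/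
def minDiff {N : ℕ} (τ ξ : Fin N → Fin 2) : ℤ :=
  (Finset.range (N + 1)).inf' (by simp) fun j => pSum τ j - pSum ξ j

/-- `f_N(τ) = Σ_ξ b^(s^τ(N)−s^ξ(N)) (ab)^(−min_{0≤j≤N}(s^τ(j)−s^ξ(j)))`. -/
noncomputable def fTL (a b : ℝ) {N : ℕ} (τ : Fin N → Fin 2) : ℝ :=
  ∑ ξ : Fin N → Fin 2, b ^ (pSum τ N - pSum ξ N) * (a * b) ^ (-(minDiff τ ξ))

section Aux

variable {N : ℕ}

abbrev Pair (N : ℕ) := (Fin N → Fin 2) × (Fin N → Fin 2)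

def dd (x : Pair N) (j : ℕ) : ℤ := pSum x.1 j - pSum x.2 j

lemma pSum_zero (τ : Fin N → Fin 2) : pSum τ 0 = 0 := by simp [pSum]

lemma pSum_succ (τ : Fin N → Fin 2) (k : ℕ) :
    pSum τ (k + 1) = pSum τ k + (if h : k < N then ((τ ⟨k, h⟩ : ℕ) : ℤ) else 0) := by
  by_cases h : k < N
  · rw [dif_pos h]
    have : pSum τ (k+1) = ∑ i : Fin N, ((if (i:ℕ) < k then ((τ i : ℕ) : ℤ) else 0)
        + (if (i:ℕ) = k then ((τ i : ℕ) : ℤ) else 0)) := by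
      apply Finset.sum_congr rfl
      intro i _
      split_ifs with h1 h2 h3 h4 <;> omega
    rw [this, Finset.sum_add_distrib]
    congr 1
    rw [Finset.sum_eq_single ⟨k, h⟩]
    · simp
    · intro b _ hb
      rw [if_neg]
      intro hbk
      exact hb (by ext; exact hbk)
    · simp
  · rw [dif_neg h]
    simp only [add_zero]
    apply Finset.sum_congr rfl
    intro i _
    have : (i:ℕ) < k ↔ (i:ℕ) < k + 1 := by omega
    simp [this.symm, show (i:ℕ) < k from by omega]

lemma pSum_nonneg (τ : Fin N → Fin 2) (k : ℕ) : 0 ≤ pSum τ k := by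
  apply Finset.sum_nonneg; intro i _; split_ifs <;> positivity

lemma pSum_le (τ : Fin N → Fin 2) (k : ℕ) : pSum τ k ≤ N := by
  calc pSum τ k ≤ ∑ _i : Fin N, (1:ℤ) := by
        apply Finset.sum_le_sum; intro i _
        split_ifs
        · have := (τ i).2; omega
        · norm_num
    _ = N := by simp

lemma pSum_stable (τ : Fin N → Fin 2) {k : ℕ} (hk : N ≤ k) : pSum τ k = pSum τ N := by
  apply Finset.sum_congr rfl
  intro i _
  have h1 : (i:ℕ) < k := lt_of_lt_of_le i.2 hk
  have h2 : (i:ℕ) < N := i.2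
  simp [h1, h2]

lemma dd_zero (x : Pair N) : dd x 0 = 0 := by simp [dd, pSum_zero]

lemma dd_step (x : Pair N) (k : ℕ) : |dd x (k+1) - dd x k| ≤ 1 := by
  simp only [dd, pSum_succ]
  by_cases h : k < N
  · simp only [dif_pos h]
    have := (x.1 ⟨k, h⟩).2
    have := (x.2 ⟨k, h⟩).2
    rw [abs_le]
    constructor <;> omega
  · simp [dif_neg h]

/-- Exchange the two words on coordinates `i < T`. -/
def rfl' (T : ℕ) (x : Pair N) : Pair N :=
  ((fun i => if (i:ℕ) < T then x.2 i else x.1 i),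
   (fun i => if (i:ℕ) < T then x.1 i else x.2 i))

lemma rfl'_invol (T : ℕ) (x : Pair N) : rfl' T (rfl' T x) = x := by
  unfold rfl'
  ext i <;> simp <;> split_ifs <;> rfl

lemma pSum_ite (τ ξ : Fin N → Fin 2) (T j : ℕ) :
    pSum (fun i => if (i:ℕ) < T then τ i else ξ i) j
      = pSum τ (min j T) + (pSum ξ j - pSum ξ (min j T)) := by
  unfold pSum
  rw [← Finset.sum_sub_distrib, ← Finset.sum_add_distrib]
  apply Finset.sum_congr rfl
  intro i _
  rcases Nat.lt_or_ge (i:ℕ) j with hj | hj <;> rcases Nat.lt_or_ge (i:ℕ) T with hT | hT <;>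
    simp [hj, hT, Nat.lt_min, not_lt.mpr]

lemma dd_rfl' (T : ℕ) (x : Pair N) (j : ℕ) :
    dd (rfl' T x) j = dd x j - 2 * dd x (min j T) := by
  simp only [dd, rfl', pSum_ite]
  ring

noncomputable def hitT (m : ℕ) (x : Pair N) : ℕ := sInf {j | dd x j ≤ -(m:ℤ)}

lemma hit_min {m : ℕ} {x : Pair N} {k : ℕ} (hk : k < hitT m x) : -(m:ℤ) < dd x k := by
  have := Nat.notMem_of_lt_sInf (s := {j | dd x j ≤ -(m:ℤ)}) hk
  simpa using this

lemma hit_eq {m : ℕ} (hm : 1 ≤ m) {x : Pair N} (hx : ∃ j, dd x j ≤ -(m:ℤ)) :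
    dd x (hitT m x) = -(m:ℤ) := by
  have h1 : dd x (hitT m x) ≤ -(m:ℤ) := Nat.sInf_mem hx
  have hT0 : hitT m x ≠ 0 := by
    intro h0
    rw [h0, dd_zero] at h1
    omega
  obtain ⟨k, hk⟩ : ∃ k, hitT m x = k + 1 := ⟨hitT m x - 1, by omega⟩
  have h2 : -(m:ℤ) < dd x k := hit_min (by omega)
  have h3 := dd_step x k
  rw [← hk] at h3
  rw [abs_le] at h3
  omega

lemma hit_le {m : ℕ} {x : Pair N} {j : ℕ} (hj : dd x j ≤ -(m:ℤ)) : hitT m x ≤ j :=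
  Nat.sInf_le hj

open Classical in
lemma count_le (m : ℕ) (hm : 1 ≤ m) :
    (univ.filter (fun x : Pair N => ∃ j ≤ N, dd x j ≤ -(m:ℤ))).card
      ≤ (univ.filter (fun x : Pair N => (m:ℤ) ≤ |dd x N|)).card := by
  apply Finset.card_le_card_of_injOn
    (fun x => if dd x N ≤ -(m:ℤ) then x else rfl' (hitT m x) x)
  · intro x hx
    simp only [mem_coe, mem_filter, mem_univ, true_and] at hx ⊢
    obtain ⟨j, hjN, hj⟩ := hx
    by_cases hN : dd x N ≤ -(m:ℤ)
    · rw [if_pos hN]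
      have := neg_le_abs (dd x N)
      omega
    · rw [if_neg hN]
      have hex : ∃ j, dd x j ≤ -(m:ℤ) := ⟨j, hj⟩
      have hTN : hitT m x ≤ N := le_trans (hit_le hj) hjN
      have hd := dd_rfl' (hitT m x) x N
      rw [min_eq_right hTN, hit_eq hm hex] at hd
      rw [hd]
      have h2 : -(m:ℤ) < dd x N := by omega
      have := le_abs_self (dd x N - 2 * -(m:ℤ))
      omega
  · intro x₁ hx₁ x₂ hx₂ heq
    simp only [mem_coe, mem_filter, mem_univ, true_and] at hx₁ hx₂
    obtain ⟨j₁, hj₁N, hj₁⟩ := hx₁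
    obtain ⟨j₂, hj₂N, hj₂⟩ := hx₂
    have hex₁ : ∃ j, dd x₁ j ≤ -(m:ℤ) := ⟨j₁, hj₁⟩
    have hex₂ : ∃ j, dd x₂ j ≤ -(m:ℤ) := ⟨j₂, hj₂⟩
    simp only at heq
    by_cases h1 : dd x₁ N ≤ -(m:ℤ) <;> by_cases h2 : dd x₂ N ≤ -(m:ℤ)
    · rwa [if_pos h1, if_pos h2] at heq
    · exfalso
      rw [if_pos h1, if_neg h2] at heq
      have hTN : hitT m x₂ ≤ N := le_trans (hit_le hj₂) hj₂N
      have hd := dd_rfl' (hitT m x₂) x₂ N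
      rw [min_eq_right hTN, hit_eq hm hex₂, ← heq] at hd
      omega
    · exfalso
      rw [if_neg h1, if_pos h2] at heq
      have hTN : hitT m x₁ ≤ N := le_trans (hit_le hj₁) hj₁N
      have hd := dd_rfl' (hitT m x₁) x₁ N
      rw [min_eq_right hTN, hit_eq hm hex₁, heq] at hd
      omega
    · rw [if_neg h1, if_neg h2] at heq
      have key : ∀ x : Pair N, (∃ j, dd x j ≤ -(m:ℤ)) →
          sInf {j | (m:ℤ) ≤ dd (rfl' (hitT m x) x) j} = hitT m x := by
        intro x hex
        apply le_antisymm
        · apply Nat.sInf_le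
          have hd := dd_rfl' (hitT m x) x (hitT m x)
          rw [min_self, hit_eq hm hex] at hd
          simp only [Set.mem_setOf_eq, hd]
          omega
        · apply le_csInf
          · exact ⟨hitT m x, by
              have hd := dd_rfl' (hitT m x) x (hitT m x)
              rw [min_self, hit_eq hm hex] at hd
              simp only [Set.mem_setOf_eq, hd]; omega⟩
          · intro b hb
            by_contra hlt
            push_neg at hlt
            have hd := dd_rfl' (hitT m x) x b
            rw [min_eq_left (le_of_lt hlt)] at hd
            have := hit_min (m := m) (x := x) hlt
            simp only [Set.mem_setOf_eq] at hb
            omega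
      have e3 : hitT m x₁ = hitT m x₂ := by
        rw [← key x₁ hex₁, ← key x₂ hex₂, heq]
      calc x₁ = rfl' (hitT m x₁) (rfl' (hitT m x₁) x₁) := (rfl'_invol _ _).symm
        _ = x₂ := by rw [heq, e3]; exact rfl'_invol _ _

open Classical in
lemma layer {α : Type*} [Fintype α] (c : ℝ) (hc : 1 ≤ c) (B : ℕ) (f g : α → ℕ)
    (hf : ∀ x, f x ≤ B)
    (h : ∀ m, 1 ≤ m → (univ.filter fun x => m ≤ f x).card ≤ (univ.filter fun x => m ≤ g x).card) :
    ∑ x : α, c ^ f x ≤ ∑ x : α, c ^ g x := by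
  have key1 : ∀ x, c ^ f x = 1 + ∑ m ∈ range B, if m < f x then c ^ (m+1) - c ^ m else 0 := by
    intro x
    rw [← Finset.sum_filter]
    have : (range B).filter (· < f x) = range (f x) := by
      ext a; simp only [mem_filter, mem_range]
      have := hf x; omega
    rw [this, Finset.sum_range_sub (fun m => c ^ m)]
    simp
  have key2 : ∀ x, 1 + (∑ m ∈ range B, if m < g x then c ^ (m+1) - c ^ m else 0) ≤ c ^ g x := by
    intro x
    rw [← Finset.sum_filter]
    have : (range B).filter (· < g x) = range (min B (g x)) := by
      ext a; simp only [mem_filter, mem_range]; omega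
    rw [this, Finset.sum_range_sub (fun m => c ^ m)]
    simp only [pow_zero, add_sub_cancel]
    exact pow_le_pow_right₀ hc (min_le_right _ _)
  calc ∑ x : α, c ^ f x
      = ∑ x : α, (1 + ∑ m ∈ range B, if m < f x then c ^ (m+1) - c ^ m else 0) := by
        exact Finset.sum_congr rfl fun x _ => key1 x
    _ ≤ ∑ x : α, (1 + ∑ m ∈ range B, if m < g x then c ^ (m+1) - c ^ m else 0) := by
        rw [Finset.sum_add_distrib, Finset.sum_add_distrib]
        gcongr ?_ + ?_
        · exact le_refl _
        rw [Finset.sum_comm, Finset.sum_comm (s := univ)]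
        apply Finset.sum_le_sum
        intro m hm
        have hcoef : 0 ≤ c ^ (m+1) - c ^ m :=
          sub_nonneg.mpr (pow_le_pow_right₀ hc (by omega))
        have e : ∀ (F : α → ℕ), ∑ x : α, (if m < F x then c ^ (m+1) - c ^ m else 0)
            = (c ^ (m+1) - c ^ m) * (univ.filter fun x => m + 1 ≤ F x).card := by
          intro F
          rw [← Finset.sum_filter, Finset.sum_const, nsmul_eq_mul, mul_comm]
          congr 2
        rw [e f, e g]
        apply mul_le_mul_of_nonneg_left _ hcoef
        exact_mod_cast h (m+1) (by omega)
    _ ≤ ∑ x : α, c ^ g x := Finset.sum_le_sum fun x _ => key2 x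

lemma md_nonpos (τ ξ : Fin N → Fin 2) : minDiff τ ξ ≤ 0 := by
  have h0 : (0:ℕ) ∈ Finset.range (N+1) := by simp
  have h := Finset.inf'_le (fun j => pSum τ j - pSum ξ j) h0
  unfold minDiff
  refine le_trans h ?_
  simp [pSum_zero]

lemma md_ge (τ ξ : Fin N → Fin 2) : -(N:ℤ) ≤ minDiff τ ξ := by
  apply Finset.le_inf'
  intro j _
  have h1 := pSum_nonneg τ j
  have h2 := pSum_le ξ j
  omega

lemma md_iff (x : Pair N) (m : ℕ) :
    (minDiff x.1 x.2 ≤ -(m:ℤ)) ↔ ∃ j ≤ N, dd x j ≤ -(m:ℤ)  := by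
  unfold minDiff
  rw [Finset.inf'_le_iff]
  constructor
  · rintro ⟨j, hj, hle⟩
    have := Finset.mem_range.mp hj
    exact ⟨j, by omega, hle⟩
  · rintro ⟨j, hj, hle⟩
    exact ⟨j, Finset.mem_range.mpr (by omega), hle⟩

open Classical in
lemma main_sum_le (c : ℝ) (hc : 1 ≤ c) :
    ∑ x : Pair N, c ^ (-(minDiff x.1 x.2)).toNat ≤ ∑ x : Pair N, c ^ (dd x N).natAbs := by
  apply layer c hc N
  · intro x
    have := md_ge x.1 x.2
    omega
  · intro m hm
    have e1 : (univ.filter fun x : Pair N => m ≤ (-(minDiff x.1 x.2)).toNat)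
        = univ.filter (fun x : Pair N => ∃ j ≤ N, dd x j ≤ -(m:ℤ)) := by
      apply Finset.filter_congr
      intro x _
      rw [← md_iff]
      omega
    have e2 : (univ.filter fun x : Pair N => m ≤ (dd x N).natAbs)
        = univ.filter (fun x : Pair N => (m:ℤ) ≤ |dd x N|) := by
      apply Finset.filter_congr
      intro x _
      rw [Int.abs_eq_natAbs]
      omega
    rw [e1, e2]
    exact count_le m hm

end Aux

/-- Lévy–Ottaviani-type bound: `E_rw[c^(−min_{0≤j≤N}(S₁(j)−S₂(j)))] ≤ 1 + 2 E_rw[c^|S₁(N)−S₂(N)|]`,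
where the expectation is the uniform average over all pairs of words in `{0,1}^N`. -/
theorem stmt5 (c : ℝ) (hc : 0 < c) (N : ℕ) (hN : 1 ≤ N) :
    (∑ ξ : Fin N → Fin 2, ∑ η : Fin N → Fin 2, c ^ (-(minDiff ξ η))) / 4 ^ N
      ≤ 1 + 2 * ((∑ ξ : Fin N → Fin 2, ∑ η : Fin N → Fin 2,
          c ^ |pSum ξ N - pSum η N|) / 4 ^ N) := by
  have h4 : (0:ℝ) < 4 ^ N := by positivity
  have hcard : ((Fintype.card (Fin N → Fin 2) : ℕ) : ℝ) = 2 ^ N := by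
    simp [Fintype.card_fun]
  -- rewrite the zpow sums as pow sums over products
  have eL : (∑ ξ : Fin N → Fin 2, ∑ η : Fin N → Fin 2, c ^ (-(minDiff ξ η)))
      = ∑ x : Pair N, c ^ (-(minDiff x.1 x.2)).toNat := by
    rw [Fintype.sum_prod_type]
    apply Finset.sum_congr rfl; intro ξ _
    apply Finset.sum_congr rfl; intro η _
    have h0 := md_nonpos ξ η
    have : -(minDiff ξ η) = (((-(minDiff ξ η)).toNat : ℕ) : ℤ) := by omega
    rw [this, zpow_natCast, Int.toNat_natCast]
  have eR : (∑ ξ : Fin N → Fin 2, ∑ η : Fin N → Fin 2, c ^ |pSum ξ N - pSum η N|)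
      = ∑ x : Pair N, c ^ (dd x N).natAbs := by
    rw [Fintype.sum_prod_type]
    apply Finset.sum_congr rfl; intro ξ _
    apply Finset.sum_congr rfl; intro η _
    have : |pSum ξ N - pSum η N| = (((dd (ξ, η) N).natAbs : ℕ) : ℤ) := by
      rw [Int.abs_eq_natAbs]; rfl
    rw [this, zpow_natCast]
  rw [eL, eR]
  have hRnonneg : (0:ℝ) ≤ ∑ x : Pair N, c ^ (dd x N).natAbs := by
    apply Finset.sum_nonneg
    intro x _
    positivity
  rcases le_or_gt 1 c with hc1 | hc1
  · have hmain := main_sum_le (N := N) c hc1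
    have step1 : (∑ x : Pair N, c ^ (-(minDiff x.1 x.2)).toNat) / 4 ^ N
        ≤ (∑ x : Pair N, c ^ (dd x N).natAbs) / 4 ^ N := by
      gcongr
    have hR2 : 0 ≤ (∑ x : Pair N, c ^ (dd x N).natAbs) / 4 ^ N := by positivity
    linarith
  · -- c < 1 : left side ≤ 1, right side ≥ 1
    have hL : (∑ x : Pair N, c ^ (-(minDiff x.1 x.2)).toNat) ≤ 4 ^ N := by
      calc (∑ x : Pair N, c ^ (-(minDiff x.1 x.2)).toNat)
          ≤ ∑ _x : Pair N, (1:ℝ) := by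
            apply Finset.sum_le_sum
            intro x _
            exact pow_le_one₀ hc.le hc1.le
        _ = 4 ^ N := by
            rw [Finset.sum_const, nsmul_eq_mul, mul_one, Finset.card_univ]
            rw [Fintype.card_prod]
            push_cast [Fintype.card_fun]
            rw [← mul_pow]
            norm_num
    have : (∑ x : Pair N, c ^ (-(minDiff x.1 x.2)).toNat) / 4 ^ N ≤ 1 := by
      rw [div_le_one h4]; exact hL
    have h2 : 0 ≤ 2 * ((∑ x : Pair N, c ^ (dd x N).natAbs) / 4 ^ N) := by positivity
    linarith
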